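/- Policy comparison guarantee (Theorem 2 of the paper, abstract form): Let ρ, η : A → ℝ on a finite set A of cardinality n with values ρ(a) ∈ [−R, R] and ∑_a |η(a)| ≤ 2, and let Λ be a uniformly random m-element subset of A. Set τ = ∑_{a∈Λ} ρ(a)η(a) and Δ = ∑_{a∈A} ρ(a)η(a) with Δ ≠ 0. Then P[τ·Δ ≤ 0] ≤ exp(− m² Δ² / (8 n² R²)). -/

import Mathlib

open scoped Classical

/-- Number of `m`-subsets of `A` containing a fixed element `a ∈ A`. -/
lemma pcg_count {α : Type*} [DecidableEq α] {A : Finset α} {a : α} (ha : a ∈ A)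
    (m : ℕ) (hm : 1 ≤ m) :
    ((A.powersetCard m).filter (fun Λ => a ∈ Λ)).card = (A.card - 1).choose (m - 1) := by
  have hcard : ((A.powersetCard m).filter (fun Λ => a ∈ Λ)).card
      = ((A.erase a).powersetCard (m - 1)).card := by
    apply Finset.card_bij' (fun Λ _ => Λ.erase a) (fun B _ => insert a B)
    · intro Λ hΛ
      rw [Finset.mem_filter] at hΛ
      exact Finset.insert_erase hΛ.2
    · intro B hB
      rw [Finset.mem_powersetCard] at hB
      have haB : a ∉ B := fun h => (Finset.mem_erase.mp (hB.1 h)).1 rfl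
      exact Finset.erase_insert haB
    · intro Λ hΛ
      rw [Finset.mem_filter, Finset.mem_powersetCard] at hΛ
      rw [Finset.mem_powersetCard]
      exact ⟨Finset.erase_subset_erase a hΛ.1.1,
        by rw [Finset.card_erase_of_mem hΛ.2, hΛ.1.2]⟩
    · intro B hB
      rw [Finset.mem_powersetCard] at hB
      have haB : a ∉ B := fun h => (Finset.mem_erase.mp (hB.1 h)).1 rfl
      rw [Finset.mem_filter, Finset.mem_powersetCard]
      refine ⟨⟨Finset.insert_subset ha (hB.1.trans (Finset.erase_subset a A)), ?_⟩,
        Finset.mem_insert_self a B⟩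
      rw [Finset.card_insert_of_notMem haB, hB.2]
      have hcA : 1 ≤ A.card := Finset.card_pos.mpr ⟨a, ha⟩
      have hle : m - 1 ≤ A.card - 1 := by
        have hB2 : (A.erase a).card = A.card - 1 := Finset.card_erase_of_mem ha
        calc m - 1 = B.card := hB.2.symm
          _ ≤ (A.erase a).card := Finset.card_le_card hB.1
          _ = A.card - 1 := hB2
      omega
  rw [hcard, Finset.card_powersetCard, Finset.card_erase_of_mem ha]

/-- Double counting: summing a function over all `m`-subsets of `A`. -/
lemma pcg_sum {α : Type*} [DecidableEq α] (A : Finset α) (g : α → ℝ) (m : ℕ)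
    (hm : 1 ≤ m) :
    ∑ Λ ∈ A.powersetCard m, ∑ a ∈ Λ, g a
      = ((A.card - 1).choose (m - 1) : ℝ) * ∑ a ∈ A, g a := by
  have h1 : ∀ Λ ∈ A.powersetCard m, ∑ a ∈ Λ, g a = ∑ a ∈ A, if a ∈ Λ then g a else 0 := by
    intro Λ hΛ
    rw [Finset.mem_powersetCard] at hΛ
    rw [← Finset.sum_filter]
    congr 1
    ext x
    simp only [Finset.mem_filter]
    exact ⟨fun hx => ⟨hΛ.1 hx, hx⟩, fun hx => hx.2⟩
  rw [Finset.sum_congr rfl h1, Finset.sum_comm, Finset.mul_sum]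
  refine Finset.sum_congr rfl fun a ha => ?_
  rw [← Finset.sum_filter, Finset.sum_const, pcg_count ha m hm]
  simp [mul_comm]

/-- Convexity of `exp`: interpolation bound on `[-c, c]`. -/
lemma pcg_convex {c x y : ℝ} (hc : 0 < c) (hy : |y| ≤ c) :
    Real.exp (-(x / c) * y)
      ≤ (c - y) / (2 * c) * Real.exp x + (c + y) / (2 * c) * Real.exp (-x) := by
  rw [abs_le] at hy
  have h1 : 0 ≤ (c - y) / (2 * c) := by
    apply div_nonneg _ (by linarith)
    linarith [hy.2]
  have h2 : 0 ≤ (c + y) / (2 * c) := by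
    apply div_nonneg _ (by linarith)
    linarith [hy.1]
  have hab : (c - y) / (2 * c) + (c + y) / (2 * c) = 1 := by
    field_simp
    ring
  have key := convexOn_exp.2 (Set.mem_univ x) (Set.mem_univ (-x)) h1 h2 hab
  have harg : ((c - y) / (2 * c)) • x + ((c + y) / (2 * c)) • (-x) = -(x / c) * y := by
    simp only [smul_eq_mul]
    field_simp
    ring
  rw [harg] at key
  simpa [smul_eq_mul] using key

set_option maxHeartbeats 1000000 in
theorem policy_comparison_guarantee {α : Type*} [DecidableEq α]
    (A : Finset α) (ρ η : α → ℝ) (n m : ℕ) (R : ℝ)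
    (hn : A.card = n) (hm1 : 1 ≤ m) (hmn : m ≤ n)
    (hR : 0 < R) (hρ : ∀ a ∈ A, |ρ a| ≤ R)
    (hη : ∑ a ∈ A, |η a| ≤ 2)
    (hΔ : (∑ a ∈ A, ρ a * η a) ≠ 0) :
    (((A.powersetCard m).filter
        (fun Λ => (∑ a ∈ Λ, ρ a * η a) * (∑ a ∈ A, ρ a * η a) ≤ 0)).card : ℝ)
        / (n.choose m : ℝ)
      ≤ Real.exp (-((m : ℝ) ^ 2 * (∑ a ∈ A, ρ a * η a) ^ 2)
            / (8 * (n : ℝ) ^ 2 * R ^ 2)) := by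
  have hn1 : 1 ≤ n := le_trans hm1 hmn
  have hnR : (0:ℝ) < n := by exact_mod_cast lt_of_lt_of_le zero_lt_one (by exact_mod_cast hn1)
  set Δ : ℝ := ∑ a ∈ A, ρ a * η a with hΔdef
  set σ : ℝ := if 0 < Δ then 1 else -1 with hσdef
  have hσsq : σ * σ = 1 := by
    rcases lt_or_ge 0 Δ with h | h
    · rw [hσdef, if_pos h]; norm_num
    · rw [hσdef, if_neg (not_lt.mpr h)]; norm_num
  have hσabs : |σ| = 1 := by
    rcases lt_or_ge 0 Δ with h | h
    · rw [hσdef, if_pos h]; norm_num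
    · rw [hσdef, if_neg (not_lt.mpr h)]; norm_num
  have hD : 0 < σ * Δ := by
    rcases lt_or_ge 0 Δ with h | h
    · rw [hσdef, if_pos h]; linarith
    · have hΔneg : Δ < 0 := lt_of_le_of_ne h hΔ
      rw [hσdef, if_neg (not_lt.mpr h)]; nlinarith
  set D : ℝ := σ * Δ with hDdef
  set c : ℝ := 2 * R with hcdef
  have hc : 0 < c := by rw [hcdef]; linarith
  -- bound on partial sums
  have habs : ∀ Λ : Finset α, Λ ⊆ A → |∑ a ∈ Λ, ρ a * η a| ≤ c := by
    intro Λ hΛ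
    calc |∑ a ∈ Λ, ρ a * η a| ≤ ∑ a ∈ Λ, |ρ a * η a| := Finset.abs_sum_le_sum_abs _ _
      _ ≤ ∑ a ∈ A, |ρ a * η a| := Finset.sum_le_sum_of_subset_of_nonneg hΛ
          (fun a _ _ => abs_nonneg _)
      _ ≤ ∑ a ∈ A, R * |η a| := Finset.sum_le_sum (fun a ha => by
          rw [abs_mul]
          exact mul_le_mul_of_nonneg_right (hρ a ha) (abs_nonneg _))
      _ = R * ∑ a ∈ A, |η a| := by rw [Finset.mul_sum]
      _ ≤ R * 2 := mul_le_mul_of_nonneg_left hη hR.le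
      _ = c := by rw [hcdef]; ring
  have hDc : D ≤ c := by
    have h1 := habs A (subset_refl A)
    rw [hDdef]
    calc σ * Δ ≤ |σ * Δ| := le_abs_self _
      _ = |Δ| := by rw [abs_mul, hσabs, one_mul]
      _ ≤ c := h1
  set N : ℕ := n.choose m with hNdef
  have hN : 0 < N := Nat.choose_pos hmn
  have hNR : (0:ℝ) < N := by exact_mod_cast hN
  set S := A.powersetCard m with hSdef
  have hScard : S.card = N := by rw [hSdef, Finset.card_powersetCard, hn]
  set Y : Finset α → ℝ := fun Λ => σ * ∑ a ∈ Λ, ρ a * η a with hYdef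
  have hYabs : ∀ Λ ∈ S, |Y Λ| ≤ c := by
    intro Λ hΛ
    rw [hSdef, Finset.mem_powersetCard] at hΛ
    have h1 := habs Λ hΛ.1
    rw [hYdef]
    calc |σ * ∑ a ∈ Λ, ρ a * η a| = |σ| * |∑ a ∈ Λ, ρ a * η a| := abs_mul _ _
      _ = |∑ a ∈ Λ, ρ a * η a| := by rw [hσabs, one_mul]
      _ ≤ c := h1
  -- mean: ∑_{Λ ∈ S} Y Λ = N * μ with μ = m * D / n
  set μ : ℝ := m * D / n with hμdef
  have hmR : (0:ℝ) < m := by exact_mod_cast lt_of_lt_of_le zero_lt_one (by exact_mod_cast hm1)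
  have hμpos : 0 < μ := by
    apply div_pos (mul_pos hmR hD) hnR
  have hchoose : (n : ℝ) * ((n-1).choose (m-1) : ℝ) = (m : ℝ) * N := by
    have h := Nat.add_one_mul_choose_eq (n-1) (m-1)
    simp -failIfUnchanged only [Nat.succ_eq_add_one] at h
    rw [Nat.sub_add_cancel hn1, Nat.sub_add_cancel hm1] at h
    rw [hNdef]
    exact_mod_cast h.trans (mul_comm _ _)
  have hsumY : ∑ Λ ∈ S, Y Λ = N * μ := by
    have h := pcg_sum A (fun a => ρ a * η a) m hm1
    rw [hn] at h
    rw [hYdef]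
    simp only
    rw [← Finset.mul_sum, hSdef, h, hμdef, hDdef]
    have h' : ∑ a ∈ A, (fun a => ρ a * η a) a = Δ := rfl
    rw [h']
    field_simp
    linear_combination σ * hchoose
  have hμc : μ ≤ c := by
    rw [hμdef, div_le_iff₀ hnR]
    have hmn' : (m:ℝ) ≤ n := by exact_mod_cast hmn
    nlinarith [hD.le, hc.le]
  -- Chernoff parameters
  set p : ℝ := (c - μ) / (2 * c) with hpdef
  set q : ℝ := (c + μ) / (2 * c) with hqdef
  have hp0 : 0 ≤ p := div_nonneg (by linarith) (by linarith)
  have hq0 : 0 < q := div_pos (by linarith) (by linarith)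
  have hpq : p + q = 1 := by rw [hpdef, hqdef]; field_simp; ring
  have hple : p ≤ q := by
    rw [hpdef, hqdef, div_le_div_iff₀ (by linarith) (by linarith)]
    nlinarith
  -- the exp identity needed at the end
  have hsqrt_exp : Real.sqrt (Real.exp (-(μ^2/c^2))) = Real.exp (-(μ^2) / (2 * c^2)) := by
    have h2 : Real.exp (-(μ^2) / (2 * c^2)) ^ 2 = Real.exp (-(μ^2/c^2)) := by
      rw [← Real.exp_nat_mul]
      congr 1
      push_cast
      field_simp
    rw [← h2, Real.sqrt_sq (Real.exp_pos _).le]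
  -- choose the Chernoff exponent x ≥ 0 achieving the bound
  have key : ∃ x : ℝ, 0 ≤ x ∧ p * Real.exp x + q * Real.exp (-x)
      ≤ Real.exp (-(μ^2) / (2 * c^2)) := by
    rcases eq_or_lt_of_le hp0 with hp | hp
    · -- p = 0, so μ = c, q = 1
      have hμeq : μ = c := by
        have h3 : c - μ = 0 := by
          by_contra h
          exact (div_ne_zero h (by linarith : (2:ℝ)*c ≠ 0)) hp.symm
        linarith
      have hq1 : q = 1 := by rw [hqdef, hμeq]; field_simp; ring
      refine ⟨1/2, by norm_num, ?_⟩
      rw [← hp, hq1, hμeq]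
      have h4 : -(c^2) / (2 * c^2) = -(1/2) := by
        field_simp
      rw [h4]
      norm_num
    · -- p > 0 : take exp x = sqrt (q / p)
      have hqp1 : 1 ≤ q / p := by
        rw [le_div_iff₀ hp]
        linarith
      have hs : 0 < Real.sqrt (q / p) := Real.sqrt_pos.mpr (by positivity)
      refine ⟨Real.log (Real.sqrt (q / p)), ?_, ?_⟩
      · apply Real.log_nonneg
        rw [show (1:ℝ) = Real.sqrt 1 by rw [Real.sqrt_one]]
        exact Real.sqrt_le_sqrt hqp1
      · rw [Real.exp_log hs, ← Real.log_inv, Real.exp_log (by positivity)]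
        have e1 : p * Real.sqrt (q / p) = Real.sqrt (p * q) := by
          rw [show p * q = p^2 * (q/p) by field_simp,
            Real.sqrt_mul (by positivity) _, Real.sqrt_sq hp.le]
        have e2 : q * (Real.sqrt (q / p))⁻¹ = Real.sqrt (p * q) := by
          rw [← Real.sqrt_inv, inv_div,
            show p * q = q^2 * (p/q) by field_simp,
            Real.sqrt_mul (by positivity) _, Real.sqrt_sq hq0.le]
        rw [e1, e2, ← two_mul]
        have hpqval : p * q = (c^2 - μ^2) / (4 * c^2) := by
          rw [hpdef, hqdef]
          field_simp
          ring
        have h2s : 2 * Real.sqrt (p * q) = Real.sqrt (1 - μ^2/c^2) := by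
          rw [show (1:ℝ) - μ^2/c^2 = 4 * (p * q) by rw [hpqval]; field_simp,
            Real.sqrt_mul (by norm_num : (0:ℝ) ≤ 4) _,
            show Real.sqrt 4 = 2 by
              rw [show (4:ℝ) = 2^2 by norm_num, Real.sqrt_sq (by norm_num : (0:ℝ) ≤ 2)]]
        rw [h2s]
        have hle : 1 - μ^2/c^2 ≤ Real.exp (-(μ^2/c^2)) := by
          linarith [Real.add_one_le_exp (-(μ^2/c^2))]
        calc Real.sqrt (1 - μ^2/c^2) ≤ Real.sqrt (Real.exp (-(μ^2/c^2))) :=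
              Real.sqrt_le_sqrt hle
          _ = Real.exp (-(μ^2) / (2 * c^2)) := hsqrt_exp
  obtain ⟨x, hx0, hxbound⟩ := key
  -- Chernoff bound
  set E := S.filter (fun Λ => (∑ a ∈ Λ, ρ a * η a) * Δ ≤ 0) with hEdef
  have hevent : ∀ Λ ∈ E, Y Λ ≤ 0 := by
    intro Λ hΛ
    rw [hEdef, Finset.mem_filter] at hΛ
    have h := hΛ.2
    rw [hYdef]
    by_contra hcon
    push_neg at hcon
    have h5 : 0 < (σ * ∑ a ∈ Λ, ρ a * η a) * (σ * Δ) := mul_pos hcon hD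
    nlinarith [hσsq]
  have step1 : (E.card : ℝ) ≤ ∑ Λ ∈ S, Real.exp (-(x/c) * Y Λ) := by
    calc (E.card : ℝ) = ∑ Λ ∈ E, (1:ℝ) := by simp
      _ ≤ ∑ Λ ∈ E, Real.exp (-(x/c) * Y Λ) := Finset.sum_le_sum (fun Λ hΛ => by
          apply Real.one_le_exp
          have h6 := hevent Λ hΛ
          have hxc : 0 ≤ x / c := div_nonneg hx0 hc.le
          nlinarith)
      _ ≤ ∑ Λ ∈ S, Real.exp (-(x/c) * Y Λ) := Finset.sum_le_sum_of_subset_of_nonneg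
          (Finset.filter_subset _ _) (fun _ _ _ => (Real.exp_pos _).le)
  have step2 : ∑ Λ ∈ S, Real.exp (-(x/c) * Y Λ)
      ≤ (N : ℝ) * (p * Real.exp x + q * Real.exp (-x)) := by
    calc ∑ Λ ∈ S, Real.exp (-(x/c) * Y Λ)
        ≤ ∑ Λ ∈ S, ((c - Y Λ) / (2*c) * Real.exp x + (c + Y Λ) / (2*c) * Real.exp (-x)) :=
          Finset.sum_le_sum (fun Λ hΛ => pcg_convex hc (hYabs Λ hΛ))
      _ = (N : ℝ) * (p * Real.exp x + q * Real.exp (-x)) := by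
          rw [Finset.sum_add_distrib, ← Finset.sum_mul, ← Finset.sum_mul]
          have hA1 : ∑ Λ ∈ S, (c - Y Λ) / (2*c) = (N:ℝ) * p := by
            rw [← Finset.sum_div, Finset.sum_sub_distrib, Finset.sum_const, hScard, hsumY,
              hpdef, nsmul_eq_mul]
            field_simp
          have hA2 : ∑ Λ ∈ S, (c + Y Λ) / (2*c) = (N:ℝ) * q := by
            rw [← Finset.sum_div, Finset.sum_add_distrib, Finset.sum_const, hScard, hsumY,
              hqdef, nsmul_eq_mul]
            field_simp
          rw [hA1, hA2]; ring
  -- conclude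
  have hexp_eq : Real.exp (-(μ^2) / (2 * c^2))
      = Real.exp (-((m : ℝ) ^ 2 * Δ ^ 2) / (8 * (n : ℝ) ^ 2 * R ^ 2)) := by
    congr 1
    have hσ2 : σ^2 = 1 := by rw [pow_two]; exact hσsq
    have hn0 : (n:ℝ) ≠ 0 := hnR.ne'
    have hR0 : R ≠ 0 := hR.ne'
    rw [hμdef, hcdef, hDdef, div_pow, mul_pow, mul_pow, hσ2, one_mul]
    field_simp
    ring
  have hfinal : (E.card : ℝ)
      ≤ (N:ℝ) * Real.exp (-((m : ℝ) ^ 2 * Δ ^ 2) / (8 * (n : ℝ) ^ 2 * R ^ 2)) := by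
    calc (E.card : ℝ) ≤ (N : ℝ) * (p * Real.exp x + q * Real.exp (-x)) := step1.trans step2
      _ ≤ (N:ℝ) * Real.exp (-(μ^2) / (2 * c^2)) :=
          mul_le_mul_of_nonneg_left hxbound hNR.le
      _ = _ := by rw [hexp_eq]
  rw [div_le_iff₀ hNR]
  calc (E.card : ℝ) ≤ _ := hfinal
    _ = _ := by ring
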